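/- Let G be a finite abelian p-group and 1 < H ≤ G. Then there exists a subgroup N ≤ G such that G/N is cyclic and |H : H ∩ N| = p. -/

import Mathlib

/-- In a finite abelian `p`-group `G`, for any nontrivial subgroup `H` there is a
subgroup `N` with `G/N` cyclic and `|H : H ∩ N| = p`. -/
theorem stmt11 {G : Type*} [CommGroup G] [Finite G] (p : ℕ) (hp : p.Prime)
    (hG : IsPGroup p G) (H : Subgroup G) (hH : ⊥ < H) :
    ∃ N : Subgroup G, IsCyclic (G ⧸ N) ∧ N.relIndex H = p := by
  classical
  -- pick a nontrivial element of H
  obtain ⟨a, haH, ha1⟩ := SetLike.exists_of_lt hH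
  rw [Subgroup.mem_bot] at ha1
  -- a character separating a from 1
  have : NeZero (Monoid.exponent G) := ⟨Monoid.exponent_ne_zero_of_finite⟩
  obtain ⟨φ, hφ⟩ := CommGroup.exists_apply_ne_one_of_hasEnoughRootsOfUnity G ℂ (a := a) ha1
  -- the image of H is a cyclic p-group of order p^k, k ≥ 1
  set K : Subgroup ℂˣ := H.map φ with hK
  have hKfin : Finite K := Set.Finite.image _ (Set.toFinite _)
  have hKp : IsPGroup p K := IsPGroup.map (IsPGroup.to_subgroup hG H) φ
  have : Fact p.Prime := ⟨hp⟩
  obtain ⟨k, hk⟩ := hKp.exists_card_eq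
  have hk1 : 1 ≤ k := by
    by_contra h
    interval_cases k
    rw [pow_zero, Nat.card_eq_one_iff_unique] at hk
    have : φ a ∈ K := ⟨a, haH, rfl⟩
    have h1 : (1 : ℂˣ) ∈ K := K.one_mem
    exact hφ (Subtype.ext_iff.mp (hk.1.elim ⟨φ a, this⟩ ⟨1, h1⟩))
  -- compose with the p^(k-1) power map
  set m := p ^ (k - 1) with hm
  set ψ : G →* ℂˣ := (powMonoidHom m).comp φ with hψ
  refine ⟨ψ.ker, ?_, ?_⟩
  · -- G ⧸ ker ψ ≃ range ψ, a finite subgroup of ℂˣ, hence cyclic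
    have : Finite ψ.range := Set.finite_range _
    exact isCyclic_of_surjective (QuotientGroup.quotientKerEquivRange ψ).symm
      (MulEquiv.surjective _)
  · rw [Subgroup.relIndex_ker]
    have hmap : H.map ψ = K.map (powMonoidHom m) := by
      rw [hψ, hK, ← Subgroup.map_map]
    rw [hmap]
    -- K is cyclic, generated by some g of order p^k
    obtain ⟨g, hg⟩ := IsCyclic.exists_generator (α := K)
    have hKz : K = Subgroup.zpowers (g : ℂˣ) := by
      ext x
      constructor
      · intro hx
        obtain ⟨n, hn⟩ := hg ⟨x, hx⟩
        exact ⟨n, congrArg Subtype.val hn⟩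
      · intro hx
        obtain ⟨n, hn⟩ := hx
        simpa [← hn] using Subgroup.zpow_mem K g.2 n
    have hord : orderOf (g : ℂˣ) = p ^ k := by
      rw [← Nat.card_zpowers, ← hKz, hk]
    rw [hKz, MonoidHom.map_zpowers, Nat.card_zpowers, powMonoidHom_apply,
      orderOf_pow' _ (by rw [hm]; exact (pow_pos hp.pos _).ne' : m ≠ 0), hord, hm, Nat.gcd_eq_right (pow_dvd_pow p (Nat.sub_le k 1)),
      ← pow_sub_one_mul (by omega : k ≠ 0) p, Nat.mul_div_cancel_left _
        (pow_pos hp.pos _)]
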